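/- arXiv:2502.14754 — 4 statements merged into one kernel-verified Lean document; each statement's English description precedes it below -/
import Mathlib

section
/- Extended Boundary Crossing Theorem: Let p_t(z) = a_n(t)z^n + ⋯ + a₁(t)z + a₀(t), t ∈ [a,b], be a family of polynomials where each coefficient function a_j : [a,b] → ℂ is continuous. If p_a(z) is Hurwitz stable and a_n(t) ≠ 0 for every t ∈ [a,b), then either p_t(z) is Hurwitz stable for every t ∈ [a,b], or there exists (t⋆, ω⋆) ∈ (a,b] × ℝ such that p_{t⋆}(iω⋆) = 0. -/
open Polynomial

/-- A (complex) polynomial is Hurwitz stable if all its roots lie in the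
open left half-plane. -/
def HurwitzStable (p : Polynomial ℂ) : Prop :=
  ∀ z : ℂ, p.eval z = 0 → z.re < 0

/-- The complex polynomial `∑_{i=0}^n c i * z^i` built from a coefficient function. -/
noncomputable def polyOfCoeffsC (n : ℕ) (c : ℕ → ℂ) : Polynomial ℂ :=
  ∑ i ∈ Finset.range (n + 1), Polynomial.C (c i) * Polynomial.X ^ i

noncomputable def Complex.abs : AbsoluteValue ℂ ℝ :=
  IsAbsoluteValue.toAbsoluteValue (norm : ℂ → ℝ)

lemma Complex.norm_eq_abs (z : ℂ) : ‖z‖ = Complex.abs z := rfl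

lemma Complex.abs_ofReal (x : ℝ) : Complex.abs (x : ℂ) = |x| := Complex.norm_real x

lemma Complex.continuous_abs : Continuous Complex.abs := continuous_norm

lemma eval_polyOfCoeffsC (n : ℕ) (c : ℕ → ℂ) (z : ℂ) :
    (polyOfCoeffsC n c).eval z = ∑ i ∈ Finset.range (n+1), c i * z ^ i := by
  simp [polyOfCoeffsC, Polynomial.eval_finset_sum]

lemma natDegree_polyOfCoeffsC_le (n : ℕ) (c : ℕ → ℂ) : (polyOfCoeffsC n c).natDegree ≤ n := by
  apply Polynomial.natDegree_sum_le_of_forall_le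
  intro i hi
  exact le_trans (Polynomial.natDegree_C_mul_le _ _)
    (le_trans (Polynomial.natDegree_X_pow_le _) (Finset.mem_range_succ_iff.mp hi))

lemma HurwitzStable.ne_zero' {p : Polynomial ℂ} (h : HurwitzStable p) : p ≠ 0 := by
  intro h0
  have := h 1 (by simp [h0])
  norm_num at this

lemma multiset_abs_prod_le (z : ℂ) (s : ℝ) (hs : 0 ≤ s) (hx : 0 < z.re)
    (M : Multiset ℂ) (hM : ∀ r ∈ M, r.re < 0) :
    (M.map (fun r => Complex.abs (z + s - r))).prod ≤
      (M.map (fun r => Complex.abs (z - r))).prod * (1 + s / z.re) ^ Multiset.card M := by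
  induction M using Multiset.induction with
  | empty => simp
  | cons r M ih =>
    have hr : r.re < 0 := hM r (Multiset.mem_cons_self r M)
    have hrest := ih (fun x hx => hM x (Multiset.mem_cons_of_mem hx))
    have hzr : z.re ≤ Complex.abs (z - r) := by
      have h1 : (z - r).re ≤ Complex.abs (z - r) := Complex.re_le_norm _
      have : z.re ≤ (z - r).re := by simp [Complex.sub_re]; linarith
      linarith
    have hfac : Complex.abs (z + s - r) ≤ Complex.abs (z - r) * (1 + s / z.re) := by
      have h1 : Complex.abs (z + s - r) ≤ Complex.abs (z - r) + s := by
        have : z + s - r = (z - r) + s := by ring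
        rw [this]
        calc Complex.abs ((z - r) + s) ≤ Complex.abs (z - r) + Complex.abs s :=
              Complex.abs.add_le _ _
        _ = Complex.abs (z - r) + s := by rw [Complex.abs_ofReal, abs_of_nonneg hs]
      have h2 : s ≤ Complex.abs (z - r) * (s / z.re) := by
        have h3 := mul_le_mul_of_nonneg_right hzr (div_nonneg hs hx.le)
        have h4 : z.re * (s / z.re) = s := by field_simp
        linarith
      calc Complex.abs (z + s - r) ≤ Complex.abs (z - r) + s := h1
        _ ≤ Complex.abs (z - r) + Complex.abs (z - r) * (s / z.re) := by linarith
        _ = Complex.abs (z - r) * (1 + s / z.re) := by ring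
    simp only [Multiset.map_cons, Multiset.prod_cons, Multiset.card_cons]
    calc Complex.abs (z + s - r) * (M.map (fun r => Complex.abs (z + s - r))).prod
        ≤ (Complex.abs (z - r) * (1 + s / z.re)) *
          ((M.map (fun r => Complex.abs (z - r))).prod * (1 + s / z.re) ^ Multiset.card M) := by
          apply mul_le_mul hfac hrest (Multiset.prod_nonneg ?_) (by positivity)
          intro x hxm
          obtain ⟨y, _, rfl⟩ := Multiset.mem_map.mp hxm
          exact AbsoluteValue.nonneg _ _
      _ = Complex.abs (z - r) * (M.map (fun r => Complex.abs (z - r))).prod *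
            (1 + s / z.re) ^ (Multiset.card M + 1) := by ring

lemma abs_eval_factored (q : Polynomial ℂ) (w : ℂ) :
    Complex.abs (q.eval w) =
      Complex.abs q.leadingCoeff * (q.roots.map (fun r => Complex.abs (w - r))).prod := by
  conv_lhs => rw [Polynomial.Splits.eq_prod_roots (IsAlgClosed.splits q)]
  rw [Polynomial.eval_mul, Polynomial.eval_multiset_prod, map_mul, map_multiset_prod]
  simp [Multiset.map_map, Function.comp]

lemma evalL {n : ℕ} (q : Polynomial ℂ) (hst : HurwitzStable q)
    (hdeg : q.natDegree ≤ n) (z : ℂ) (hx : 0 < z.re) (s : ℝ) (hs : 0 ≤ s) :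
    Complex.abs (q.eval (z + s)) ≤ Complex.abs (q.eval z) * (1 + s / z.re) ^ n := by
  have hroots : ∀ r ∈ q.roots, r.re < 0 := fun r hr =>
    hst r ((Polynomial.isRoot_of_mem_roots hr))
  have hcard : Multiset.card q.roots = q.natDegree :=
    (Polynomial.splits_iff_card_roots.mp (IsAlgClosed.splits q))
  have hbase : (1:ℝ) ≤ 1 + s / z.re := by
    have : 0 ≤ s / z.re := div_nonneg hs hx.le
    linarith
  calc Complex.abs (q.eval (z + s))
      = Complex.abs q.leadingCoeff * (q.roots.map (fun r => Complex.abs (z + s - r))).prod :=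
        abs_eval_factored q _
    _ ≤ Complex.abs q.leadingCoeff *
        ((q.roots.map (fun r => Complex.abs (z - r))).prod *
          (1 + s / z.re) ^ Multiset.card q.roots) :=
        mul_le_mul_of_nonneg_left (multiset_abs_prod_le z s hs hx _ hroots)
          (AbsoluteValue.nonneg _ _)
    _ = Complex.abs (q.eval z) * (1 + s / z.re) ^ Multiset.card q.roots := by
        rw [abs_eval_factored q z]; ring
    _ ≤ Complex.abs (q.eval z) * (1 + s / z.re) ^ n := by
        apply mul_le_mul_of_nonneg_left _ (AbsoluteValue.nonneg _ _)
        exact pow_le_pow_right₀ hbase (hcard ▸ hdeg)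

lemma root_bound {n : ℕ} (co : ℕ → ℂ) (m B : ℝ) (hm : 0 < m)
    (hmn : m ≤ Complex.abs (co n)) (hB : ∀ i ≤ n, Complex.abs (co i) ≤ B) (z : ℂ)
    (hz : ∑ i ∈ Finset.range (n+1), co i * z ^ i = 0) :
    Complex.abs z ≤ max 1 (n * B / m) := by
  rcases Nat.eq_zero_or_pos n with rfl | hn
  · exfalso
    have h0 : co 0 = 0 := by simpa using hz
    rw [h0] at hmn
    simp at hmn
    linarith
  by_contra hcon
  push_neg at hcon
  have h1 : (1:ℝ) < Complex.abs z := lt_of_le_of_lt (le_max_left _ _) hcon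
  have h2 : n * B / m < Complex.abs z := lt_of_le_of_lt (le_max_right _ _) hcon
  obtain ⟨k, rfl⟩ : ∃ k, n = k + 1 := ⟨n - 1, by omega⟩
  rw [Finset.sum_range_succ] at hz
  have heq : co (k+1) * z ^ (k+1) = -∑ i ∈ Finset.range (k+1), co i * z ^ i := by
    linear_combination hz
  have habs : m * Complex.abs z ^ (k+1) ≤ (k+1) * (B * Complex.abs z ^ k) := by
    calc m * Complex.abs z ^ (k+1)
        ≤ Complex.abs (co (k+1)) * Complex.abs z ^ (k+1) := by
          apply mul_le_mul_of_nonneg_right hmn (by positivity)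
      _ = Complex.abs (co (k+1) * z ^ (k+1)) := by rw [map_mul, map_pow]
      _ = Complex.abs (∑ i ∈ Finset.range (k+1), co i * z ^ i) := by
          rw [heq, Complex.abs.map_neg]
      _ ≤ ∑ i ∈ Finset.range (k+1), Complex.abs (co i * z ^ i) :=
          Complex.abs.sum_le _ _
      _ ≤ ∑ i ∈ Finset.range (k+1), B * Complex.abs z ^ k := by
          apply Finset.sum_le_sum
          intro i hi
          have hik := Finset.mem_range.mp hi
          rw [map_mul, map_pow]
          apply mul_le_mul (hB i (by omega)) ?_ (by positivity) ?_
          · exact pow_le_pow_right₀ h1.le (by omega)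
          · exact le_trans hm.le (le_trans hmn (hB _ le_rfl))
      _ = (k+1) * (B * Complex.abs z ^ k) := by
          rw [Finset.sum_const, Finset.card_range]; ring
  have hzk : (0:ℝ) < Complex.abs z ^ k := by positivity
  have h3 : m * Complex.abs z ≤ (k+1) * B := by
    rw [pow_succ] at habs
    nlinarith
  have h4 : Complex.abs z ≤ (k+1) * B / m := by
    rw [le_div_iff₀ hm]; linarith
  push_cast at h2 ⊢
  linarith

/-- **Extended Boundary Crossing Theorem.** Let `p_t(z) = a_n(t)z^n + ⋯ + a_0(t)`,
`t ∈ [a,b]`, be a family of polynomials whose coefficient functions are continuous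
on `[a,b]`.  If `p_a` is Hurwitz stable and `a_n(t) ≠ 0` for every `t ∈ [a,b)`,
then either `p_t` is Hurwitz stable for every `t ∈ [a,b]`, or there exists
`(t⋆, ω⋆) ∈ (a,b] × ℝ` with `p_{t⋆}(iω⋆) = 0`. -/
theorem extended_boundary_crossing (n : ℕ) (a b : ℝ) (hab : a ≤ b)
    (c : ℕ → ℝ → ℂ) (hcont : ∀ j ≤ n, ContinuousOn (fun t => c j t) (Set.Icc a b))
    (hstable : HurwitzStable (polyOfCoeffsC n (fun j => c j a)))
    (hlead : ∀ t ∈ Set.Ico a b, c n t ≠ 0) :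
    (∀ t ∈ Set.Icc a b, HurwitzStable (polyOfCoeffsC n (fun j => c j t))) ∨
      ∃ t ∈ Set.Ioc a b, ∃ ω : ℝ,
        (polyOfCoeffsC n (fun j => c j t)).eval (Complex.I * ω) = 0 := by
  by_contra hcon
  push_neg at hcon
  obtain ⟨⟨t₀, ht₀m, ht₀⟩, hR⟩ := hcon
  set p : ℝ → Polynomial ℂ := fun t => polyOfCoeffsC n (fun j => c j t) with hp
  set S : Set ℝ := {t | t ∈ Set.Icc a b ∧ ¬ HurwitzStable (p t)} with hS
  have hSne : S.Nonempty := ⟨t₀, ht₀m, ht₀⟩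
  have hSbdd : BddBelow S := ⟨a, fun x hx => hx.1.1⟩
  set T := sInf S with hT
  have hTmem : a ≤ T ∧ T ≤ b := ⟨le_csInf hSne (fun x hx => hx.1.1),
    le_trans (csInf_le hSbdd ⟨ht₀m, ht₀⟩) ht₀m.2⟩
  have hTicc : T ∈ Set.Icc a b := hTmem
  have htend : ∀ t₁ ∈ Set.Icc a b, ∀ w : ℂ,
      Filter.Tendsto (fun t => (p t).eval w) (nhdsWithin t₁ (Set.Icc a b))
        (nhds ((p t₁).eval w)) := by
    intro t₁ ht₁ w
    simp only [hp, eval_polyOfCoeffsC]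
    apply tendsto_finset_sum
    intro i hi
    exact ((hcont i (Finset.mem_range_succ_iff.mp hi)) t₁ ht₁).mul_const (w ^ i)
  have hstable_lt : ∀ t, a ≤ t → t < T → HurwitzStable (p t) := by
    intro t hat htT
    by_contra hns
    have htS : t ∈ S := ⟨⟨hat, le_trans htT.le hTmem.2⟩, hns⟩
    exact absurd (csInf_le hSbdd htS) (not_le.mpr htT)
  have hTstable : HurwitzStable (p T) := by
    rcases eq_or_lt_of_le hTmem.1 with haT | haT
    · rw [← haT]; exact hstable
    · intro z hz
      by_contra hre
      push_neg at hre
      rcases eq_or_lt_of_le hre with hre0 | hre0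
      · have hz' : z = Complex.I * z.im := by
          apply Complex.ext <;> simp [← hre0]
        exact hR T ⟨haT, hTmem.2⟩ z.im (by rw [← hz']; exact hz)
      · have hKey : ∀ s : ℝ, 0 ≤ s → (p T).eval (z + s) = 0 := by
          intro s hs
          have hne : (nhdsWithin T (Set.Ico a T)).NeBot := by
            rw [← mem_closure_iff_nhdsWithin_neBot, closure_Ico (ne_of_lt haT)]
            exact ⟨hTmem.1, le_rfl⟩
          have hsub : Set.Ico a T ⊆ Set.Icc a b :=
            fun x hx => ⟨hx.1, le_trans hx.2.le hTmem.2⟩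
          have h1 : Filter.Tendsto (fun t => Complex.abs ((p t).eval (z + s)))
              (nhdsWithin T (Set.Ico a T)) (nhds (Complex.abs ((p T).eval (z + s)))) :=
            (Complex.continuous_abs.tendsto _).comp
              ((htend T hTicc (z + s)).mono_left (nhdsWithin_mono _ hsub))
          have h2 : Filter.Tendsto (fun t => Complex.abs ((p t).eval z) * (1 + s / z.re) ^ n)
              (nhdsWithin T (Set.Ico a T)) (nhds 0) := by
            have h3 := (((Complex.continuous_abs.tendsto _).comp
              ((htend T hTicc z).mono_left (nhdsWithin_mono _ hsub)))).mul_const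
              ((1 + s / z.re) ^ n)
            rw [hz] at h3
            simpa using h3
          have hle : Complex.abs ((p T).eval (z + s)) ≤ 0 := by
            apply le_of_tendsto_of_tendsto h1 h2
            apply eventually_mem_nhdsWithin.mono
            intro t ht
            exact evalL (p t) (hstable_lt t ht.1 ht.2)
              (natDegree_polyOfCoeffsC_le n _) z hre0 s hs
          have h0 : Complex.abs ((p T).eval (z + s)) = 0 :=
            le_antisymm hle (AbsoluteValue.nonneg _ _)
          exact (map_eq_zero Complex.abs).mp h0
        have hinf : {w : ℂ | (p T).IsRoot w}.Infinite := by
          have himg : ((fun s : ℝ => z + s) '' Set.Ici 0).Infinite := by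
            apply Set.Infinite.image _ (Set.Ici_infinite 0)
            intro s₁ _ s₂ _ h
            exact_mod_cast add_left_cancel h
          apply himg.mono
          rintro w ⟨s, hs, rfl⟩
          exact hKey s hs
        have hp0 : p T = 0 := Polynomial.eq_zero_of_infinite_isRoot _ hinf
        refine hR T ⟨haT, hTmem.2⟩ 0 ?_
        show (p T).eval _ = 0
        rw [hp0]
        simp
  rcases eq_or_lt_of_le hTmem.2 with hTb | hTb
  · obtain ⟨t₁, ht₁⟩ := hSne
    have hbt : t₁ = b := le_antisymm ht₁.1.2 (hTb ▸ csInf_le hSbdd ht₁)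
    exact ht₁.2 (by rw [hbt, ← hTb]; exact hTstable)
  · set b' := (T + b) / 2 with hb'
    have hTb' : T < b' := by rw [hb']; linarith
    have hb'b : b' < b := by rw [hb']; linarith
    have hab' : a ≤ b' := le_trans hTmem.1 hTb'.le
    obtain ⟨tB, htBm, htB⟩ := isCompact_Icc.exists_isMaxOn ⟨a, Set.left_mem_Icc.mpr hab⟩
      (continuousOn_finset_sum (Finset.range (n+1)) (fun i hi =>
        Complex.continuous_abs.comp_continuousOn
          (hcont i (Finset.mem_range_succ_iff.mp hi))))
    rw [isMaxOn_iff] at htB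
    set B := ∑ i ∈ Finset.range (n+1), Complex.abs (c i tB) with hBdef
    have hBbound : ∀ i ≤ n, ∀ t ∈ Set.Icc a b, Complex.abs (c i t) ≤ B := by
      intro i hi t ht
      calc Complex.abs (c i t) ≤ ∑ j ∈ Finset.range (n+1), Complex.abs (c j t) :=
            Finset.single_le_sum (f := fun j => Complex.abs (c j t))
              (fun j _ => AbsoluteValue.nonneg _ _) (Finset.mem_range_succ_iff.mpr hi)
        _ ≤ B := htB t ht
    obtain ⟨tm, htmm, htm⟩ := isCompact_Icc.exists_isMinOn ⟨a, Set.left_mem_Icc.mpr hab'⟩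
      ((Complex.continuous_abs.comp_continuousOn (hcont n le_rfl)).mono
        (Set.Icc_subset_Icc_right hb'b.le))
    rw [isMinOn_iff] at htm
    set m := Complex.abs (c n tm) with hmdef
    have hmpos : 0 < m :=
      AbsoluteValue.pos _ (hlead tm ⟨htmm.1, lt_of_le_of_lt htmm.2 hb'b⟩)
    have hexists : ∀ k : ℕ, ∃ x, x ∈ S ∧ x < min (T + 1/((k:ℝ)+1)) b' := by
      intro k
      have hlt : T < min (T + 1/((k:ℝ)+1)) b' :=
        lt_min (lt_add_of_pos_right T (by positivity)) hTb'
      obtain ⟨x, hx1, hx2⟩ := (csInf_lt_iff hSbdd hSne).mp hlt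
      exact ⟨x, hx1, hx2⟩
    choose u hu1 hu2 using hexists
    have huT : ∀ k, T ≤ u k := fun k => csInf_le hSbdd (hu1 k)
    have hub' : ∀ k, u k ≤ b' := fun k => (lt_of_lt_of_le (hu2 k) (min_le_right _ _)).le
    have huIcc : ∀ k, u k ∈ Set.Icc a b := fun k => (hu1 k).1
    have hutend : Filter.Tendsto u Filter.atTop (nhds T) := by
      apply tendsto_of_tendsto_of_tendsto_of_le_of_le tendsto_const_nhds ?_ huT
        (fun k => (lt_of_lt_of_le (hu2 k) (min_le_left _ _)).le)
      have h5 : Filter.Tendsto (fun k : ℕ => T + 1/((k:ℝ)+1)) Filter.atTop (nhds (T + 0)) :=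
        tendsto_const_nhds.add tendsto_one_div_add_atTop_nhds_zero_nat
      simpa using h5
    have hroots : ∀ k, ∃ z : ℂ, (p (u k)).eval z = 0 ∧ 0 ≤ z.re := by
      intro k
      have hnst := (hu1 k).2
      by_contra hno
      push_neg at hno
      exact hnst hno
    choose ζ hζ0 hζre using hroots
    set R := max 1 ((n : ℝ) * B / m) with hRdef
    have hζR : ∀ k, ζ k ∈ Metric.closedBall (0:ℂ) R := by
      intro k
      rw [Metric.mem_closedBall, dist_zero_right, Complex.norm_eq_abs]
      apply root_bound (fun i => c i (u k)) m B hmpos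
        (htm (u k) ⟨(huIcc k).1, hub' k⟩)
        (fun i hi => hBbound i hi (u k) (huIcc k))
      rw [← eval_polyOfCoeffsC]
      exact hζ0 k
    obtain ⟨z₁, hz₁m, φ, hφmono, hφtend⟩ :=
      tendsto_subseq_of_bounded Metric.isBounded_closedBall hζR
    have hzero : (p T).eval z₁ = 0 := by
      have hseq : Filter.Tendsto (fun k => (p (u (φ k))).eval (ζ (φ k))) Filter.atTop
          (nhds ((p T).eval z₁)) := by
        simp only [hp, eval_polyOfCoeffsC]
        apply tendsto_finset_sum
        intro i hi
        apply Filter.Tendsto.mul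
        · have hcw : Filter.Tendsto (fun t => c i t) (nhdsWithin T (Set.Icc a b))
              (nhds (c i T)) := (hcont i (Finset.mem_range_succ_iff.mp hi)) T hTicc
          apply hcw.comp
          apply tendsto_nhdsWithin_of_tendsto_nhds_of_eventually_within
          · exact hutend.comp hφmono.tendsto_atTop
          · exact Filter.Eventually.of_forall (fun k => huIcc (φ k))
        · exact hφtend.pow i
      have hconst : (fun k => (p (u (φ k))).eval (ζ (φ k))) = fun _ => (0:ℂ) :=
        funext fun k => hζ0 (φ k)
      rw [hconst] at hseq
      exact tendsto_nhds_unique hseq tendsto_const_nhds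
    have hzre : 0 ≤ z₁.re := by
      apply ge_of_tendsto ((Complex.continuous_re.tendsto _).comp hφtend)
      exact Filter.Eventually.of_forall (fun k => hζre (φ k))
    exact absurd (hTstable z₁ hzero) (not_lt.mpr hzre)
end

section
/- Kharitonov rectangle: If the four Kharitonov polynomials k₁, k₂, k₃, k₄ associated with an interval polynomial P of order n are all Hurwitz stable and a_n⁺ > 0, then for every ω ≥ 0 the value set K(iω) = {p(iω) : p ∈ P} equals the rectangle {x + iy : h₋(ω) ≤ x ≤ h₊(ω), g₋(ω) ≤ y ≤ g₊(ω)}. -/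
open Polynomial

/-- The real polynomial `∑_{i=0}^n c i * z^i` built from a coefficient function. -/
noncomputable def polyOfCoeffs (n : ℕ) (c : ℕ → ℝ) : Polynomial ℝ :=
  ∑ i ∈ Finset.range (n + 1), Polynomial.C (c i) * Polynomial.X ^ i

/-- Coefficients of the first Kharitonov polynomial: pattern −,−,+,+. -/
def k1c (am ap : ℕ → ℝ) (i : ℕ) : ℝ :=
  if i % 4 = 0 ∨ i % 4 = 1 then am i else ap i

/-- Coefficients of the second Kharitonov polynomial: pattern +,−,−,+. -/
def k2c (am ap : ℕ → ℝ) (i : ℕ) : ℝ :=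
  if i % 4 = 1 ∨ i % 4 = 2 then am i else ap i

/-- Coefficients of the third Kharitonov polynomial: pattern +,+,−,−. -/
def k3c (am ap : ℕ → ℝ) (i : ℕ) : ℝ :=
  if i % 4 = 2 ∨ i % 4 = 3 then am i else ap i

/-- Coefficients of the fourth Kharitonov polynomial: pattern −,+,+,−. -/
def k4c (am ap : ℕ → ℝ) (i : ℕ) : ℝ :=
  if i % 4 = 3 ∨ i % 4 = 0 then am i else ap i

/-- `h₋(ω) = a₀⁻ − a₂⁺ω² + a₄⁻ω⁴ − ⋯`. -/
noncomputable def hMinus (n : ℕ) (am ap : ℕ → ℝ) (ω : ℝ) : ℝ :=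
  ∑ i ∈ Finset.range (n + 1),
    if i % 4 = 0 then am i * ω ^ i else if i % 4 = 2 then -(ap i * ω ^ i) else 0

/-- `h₊(ω) = a₀⁺ − a₂⁻ω² + a₄⁺ω⁴ − ⋯`. -/
noncomputable def hPlus (n : ℕ) (am ap : ℕ → ℝ) (ω : ℝ) : ℝ :=
  ∑ i ∈ Finset.range (n + 1),
    if i % 4 = 0 then ap i * ω ^ i else if i % 4 = 2 then -(am i * ω ^ i) else 0

/-- `g₋(ω) = a₁⁻ω − a₃⁺ω³ + a₅⁻ω⁵ − ⋯`. -/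
noncomputable def gMinus (n : ℕ) (am ap : ℕ → ℝ) (ω : ℝ) : ℝ :=
  ∑ i ∈ Finset.range (n + 1),
    if i % 4 = 1 then am i * ω ^ i else if i % 4 = 3 then -(ap i * ω ^ i) else 0

/-- `g₊(ω) = a₁⁺ω − a₃⁻ω³ + a₅⁺ω⁵ − ⋯`. -/
noncomputable def gPlus (n : ℕ) (am ap : ℕ → ℝ) (ω : ℝ) : ℝ :=
  ∑ i ∈ Finset.range (n + 1),
    if i % 4 = 1 then ap i * ω ^ i else if i % 4 = 3 then -(am i * ω ^ i) else 0

lemma Khar.I_pow_mod (i : ℕ) : (Complex.I)^i = Complex.I ^ (i % 4) := by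
  conv_lhs => rw [← Nat.div_add_mod i 4]
  rw [pow_add, pow_mul, Complex.I_pow_four, one_pow, one_mul]

lemma Khar.re_term (a ω : ℝ) (i : ℕ) : ((a:ℂ) * (Complex.I*ω)^i).re =
    (if i % 4 = 0 then a*ω^i else if i % 4 = 2 then -(a*ω^i) else 0) := by
  rw [mul_pow, Khar.I_pow_mod]
  have h4 : i % 4 = 0 ∨ i % 4 = 1 ∨ i % 4 = 2 ∨ i % 4 = 3 := by omega
  rcases h4 with h|h|h|h <;>
    simp [h, pow_succ, Complex.mul_re, Complex.mul_im, ← Complex.ofReal_pow]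

lemma Khar.im_term (a ω : ℝ) (i : ℕ) : ((a:ℂ) * (Complex.I*ω)^i).im =
    (if i % 4 = 1 then a*ω^i else if i % 4 = 3 then -(a*ω^i) else 0) := by
  rw [mul_pow, Khar.I_pow_mod]
  have h4 : i % 4 = 0 ∨ i % 4 = 1 ∨ i % 4 = 2 ∨ i % 4 = 3 := by omega
  rcases h4 with h|h|h|h <;>
    simp [h, pow_succ, Complex.mul_re, Complex.mul_im, ← Complex.ofReal_pow]

lemma Khar.eval_poly (n : ℕ) (a : ℕ → ℝ) (ω : ℝ) :
    ((polyOfCoeffs n a).map (algebraMap ℝ ℂ)).eval (Complex.I * ω) =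
      ∑ i ∈ Finset.range (n+1), (a i : ℂ) * (Complex.I * ω)^i := by
  simp [polyOfCoeffs, Polynomial.map_sum, Polynomial.eval_finset_sum]

lemma Khar.re_eval (n : ℕ) (a : ℕ → ℝ) (ω : ℝ) :
    (((polyOfCoeffs n a).map (algebraMap ℝ ℂ)).eval (Complex.I * ω)).re =
      ∑ i ∈ Finset.range (n+1),
        (if i % 4 = 0 then a i*ω^i else if i % 4 = 2 then -(a i*ω^i) else 0) := by
  rw [Khar.eval_poly, Complex.re_sum]
  exact Finset.sum_congr rfl fun i _ => Khar.re_term (a i) ω i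

lemma Khar.im_eval (n : ℕ) (a : ℕ → ℝ) (ω : ℝ) :
    (((polyOfCoeffs n a).map (algebraMap ℝ ℂ)).eval (Complex.I * ω)).im =
      ∑ i ∈ Finset.range (n+1),
        (if i % 4 = 1 then a i*ω^i else if i % 4 = 3 then -(a i*ω^i) else 0) := by
  rw [Khar.eval_poly, Complex.im_sum]
  exact Finset.sum_congr rfl fun i _ => Khar.im_term (a i) ω i

lemma Khar.interp_exists {l u x : ℝ} (h1 : l ≤ x) (h2 : x ≤ u) :
    ∃ t : ℝ, 0 ≤ t ∧ t ≤ 1 ∧ (1-t)*l + t*u = x := by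
  rcases eq_or_lt_of_le (le_trans h1 h2) with h|h
  · exact ⟨0, le_refl 0, zero_le_one, by rw [h] at h1 ⊢; ring_nf; linarith⟩
  · refine ⟨(x - l)/(u - l), div_nonneg (by linarith) (by linarith), ?_, ?_⟩
    · rw [div_le_one (by linarith)]; linarith
    · have hd : u - l ≠ 0 := sub_ne_zero.mpr h.ne'
      field_simp
      ring


/-- **The Kharitonov rectangle.** If the four Kharitonov polynomials of an
interval polynomial `P` of order `n` are Hurwitz stable and `a_n⁺ > 0`, then
for every `ω ≥ 0` the value set `K(iω) = {p(iω) : p ∈ P}` equals the rectangle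
`{x + iy : h₋(ω) ≤ x ≤ h₊(ω), g₋(ω) ≤ y ≤ g₊(ω)}`. -/
theorem kharitonov_rectangle (n : ℕ) (am ap : ℕ → ℝ)
    (hle : ∀ i ≤ n, am i ≤ ap i) (hn : am n ≠ 0 ∨ ap n ≠ 0)
    (h1 : HurwitzStable ((polyOfCoeffs n (k1c am ap)).map (algebraMap ℝ ℂ)))
    (h2 : HurwitzStable ((polyOfCoeffs n (k2c am ap)).map (algebraMap ℝ ℂ)))
    (h3 : HurwitzStable ((polyOfCoeffs n (k3c am ap)).map (algebraMap ℝ ℂ)))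
    (h4 : HurwitzStable ((polyOfCoeffs n (k4c am ap)).map (algebraMap ℝ ℂ)))
    (hpos : 0 < ap n) (ω : ℝ) (hω : 0 ≤ ω) :
    {z : ℂ | ∃ a : ℕ → ℝ, (∀ i ≤ n, a i ∈ Set.Icc (am i) (ap i)) ∧
        z = ((polyOfCoeffs n a).map (algebraMap ℝ ℂ)).eval (Complex.I * ω)} =
      {z : ℂ | hMinus n am ap ω ≤ z.re ∧ z.re ≤ hPlus n am ap ω ∧
        gMinus n am ap ω ≤ z.im ∧ z.im ≤ gPlus n am ap ω} := by
  have hpow : ∀ i : ℕ, (0:ℝ) ≤ ω ^ i := fun i => pow_nonneg hω i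
  ext z
  simp only [Set.mem_setOf_eq]
  constructor
  · rintro ⟨a, ha, rfl⟩
    rw [Khar.re_eval, Khar.im_eval]
    have hmem : ∀ i ≤ n, am i ≤ a i ∧ a i ≤ ap i := fun i hi => ⟨(ha i hi).1, (ha i hi).2⟩
    refine ⟨?_, ?_, ?_, ?_⟩ <;>
    · simp only [hMinus, hPlus, gMinus, gPlus]
      apply Finset.sum_le_sum
      intro i hi
      have hi' : i ≤ n := Nat.lt_succ_iff.mp (Finset.mem_range.mp hi)
      obtain ⟨hl, hu⟩ := hmem i hi'
      have := hpow i
      have h4 : i % 4 = 0 ∨ i % 4 = 1 ∨ i % 4 = 2 ∨ i % 4 = 3 := by omega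
      rcases h4 with h|h|h|h <;> simp [h] <;> nlinarith
  · rintro ⟨hx1, hx2, hy1, hy2⟩
    obtain ⟨t, ht0, ht1, htx⟩ := Khar.interp_exists hx1 hx2
    obtain ⟨s, hs0, hs1, hsy⟩ := Khar.interp_exists hy1 hy2
    set a : ℕ → ℝ := fun i =>
      if i % 4 = 0 then (1-t)*am i + t*ap i
      else if i % 4 = 1 then (1-s)*am i + s*ap i
      else if i % 4 = 2 then (1-t)*ap i + t*am i
      else (1-s)*ap i + s*am i with haa
    refine ⟨a, ?_, ?_⟩
    · intro i hi
      have h := hle i hi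
      have h4 : i % 4 = 0 ∨ i % 4 = 1 ∨ i % 4 = 2 ∨ i % 4 = 3 := by omega
      constructor <;> · rw [haa]; dsimp only; rcases h4 with hr|hr|hr|hr <;> simp [hr] <;> nlinarith
    · have hre : (∑ i ∈ Finset.range (n+1),
          (if i % 4 = 0 then a i*ω^i else if i % 4 = 2 then -(a i*ω^i) else 0))
          = (1-t) * hMinus n am ap ω + t * hPlus n am ap ω := by
        unfold hMinus hPlus
        rw [Finset.mul_sum, Finset.mul_sum, ← Finset.sum_add_distrib]
        refine Finset.sum_congr rfl fun i _ => ?_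
        have h4 : i % 4 = 0 ∨ i % 4 = 1 ∨ i % 4 = 2 ∨ i % 4 = 3 := by omega
        rw [haa]; dsimp only; rcases h4 with hr|hr|hr|hr <;> simp [hr] <;> ring
      have him : (∑ i ∈ Finset.range (n+1),
          (if i % 4 = 1 then a i*ω^i else if i % 4 = 3 then -(a i*ω^i) else 0))
          = (1-s) * gMinus n am ap ω + s * gPlus n am ap ω := by
        unfold gMinus gPlus
        rw [Finset.mul_sum, Finset.mul_sum, ← Finset.sum_add_distrib]
        refine Finset.sum_congr rfl fun i _ => ?_
        have h4 : i % 4 = 0 ∨ i % 4 = 1 ∨ i % 4 = 2 ∨ i % 4 = 3 := by omega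
        rw [haa]; dsimp only; rcases h4 with hr|hr|hr|hr <;> simp [hr] <;> ring
      have hre' : (((polyOfCoeffs n a).map (algebraMap ℝ ℂ)).eval (Complex.I * ω)).re = z.re := by
        rw [Khar.re_eval, hre, htx]
      have him' : (((polyOfCoeffs n a).map (algebraMap ℝ ℂ)).eval (Complex.I * ω)).im = z.im := by
        rw [Khar.im_eval, him, hsy]
      exact Complex.ext hre'.symm him'.symm
end

section
/- Positive Wronskian: Let f(ω) = h(ω) + i·g(ω) be a non-constant polynomial, where h and g are real polynomials. If all the roots of f lie in the open upper half-plane {z ∈ ℂ : Im z > 0}, then for every ω ∈ ℝ one has W[h,g](ω) = h(ω)g′(ω) − h′(ω)g(ω) > 0. -/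
open Polynomial

lemma wronskian_aux (ω : ℝ) (s : Multiset ℂ) (hs : ∀ z ∈ s, 0 < z.im) :
    ((s.map (fun z => X - C z)).prod.eval (ω : ℂ) ≠ 0) ∧
    0 ≤ ((derivative ((s.map (fun z => X - C z)).prod)).eval (ω : ℂ) *
          (starRingEnd ℂ) (((s.map (fun z => X - C z)).prod).eval (ω : ℂ))).im ∧
    (s ≠ 0 → 0 < ((derivative ((s.map (fun z => X - C z)).prod)).eval (ω : ℂ) *
          (starRingEnd ℂ) (((s.map (fun z => X - C z)).prod).eval (ω : ℂ))).im) := by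
  induction s using Multiset.induction_on with
  | empty => simp
  | cons z t ih =>
    obtain ⟨h1, h2, -⟩ := ih (fun w hw => hs w (Multiset.mem_cons_of_mem hw))
    have hz : 0 < z.im := hs z (Multiset.mem_cons_self z t)
    set P : Polynomial ℂ := (t.map (fun z => X - C z)).prod with hP
    have hprod : ((z ::ₘ t).map (fun z => X - C z)).prod = (X - C z) * P := by
      simp [hP]
    rw [hprod]
    set a : ℂ := P.eval (ω : ℂ) with ha
    set b : ℂ := (derivative P).eval (ω : ℂ) with hb
    have hu : ((ω : ℂ) - z) ≠ 0 := by
      intro hc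
      have : ((ω : ℂ) - z).im = 0 := by rw [hc]; simp
      simp [Complex.sub_im] at this
      linarith
    have hev : eval (↑ω) ((X - C z) * P) = ((ω : ℂ) - z) * a := by simp [ha]
    have hdev : eval (↑ω) (derivative ((X - C z) * P)) = a + ((ω : ℂ) - z) * b := by
      rw [derivative_mul]; simp [ha, hb]
    refine ⟨by rw [hev]; exact mul_ne_zero hu h1, ?_, fun _ => ?_⟩ <;>
    · rw [hev, hdev]
      have key : ((a + ((ω : ℂ) - z) * b) * (starRingEnd ℂ) (((ω : ℂ) - z) * a)).im
          = Complex.normSq a * z.im + Complex.normSq ((ω : ℂ) - z) * (b * (starRingEnd ℂ) a).im := by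
        have e1 : (a + ((ω : ℂ) - z) * b) * (starRingEnd ℂ) (((ω : ℂ) - z) * a)
            = (Complex.normSq a : ℂ) * (starRingEnd ℂ) ((ω : ℂ) - z)
              + (Complex.normSq ((ω : ℂ) - z) : ℂ) * (b * (starRingEnd ℂ) a) := by
          rw [map_mul]
          rw [← Complex.mul_conj a, ← Complex.mul_conj ((ω : ℂ) - z)]
          ring
        rw [e1]
        simp [Complex.add_im, Complex.mul_im, Complex.conj_im, Complex.sub_im, Complex.ofReal_im]
      rw [key]
      have hpos : 0 < Complex.normSq a * z.im :=
        mul_pos (Complex.normSq_pos.2 h1) hz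
      have : 0 ≤ Complex.normSq ((ω : ℂ) - z) * (b * (starRingEnd ℂ) a).im :=
        mul_nonneg (Complex.normSq_nonneg _) h2
      linarith

/-- **Positive Wronskian.** Let `f(ω) = h(ω) + i·g(ω)` be a non-constant
polynomial, where `h` and `g` are real polynomials.  If all the roots of `f`
lie in the open upper half-plane, then `W[h,g](ω) = h(ω)g′(ω) − h′(ω)g(ω) > 0`
for every real `ω`. -/
theorem positive_wronskian (h g : Polynomial ℝ)
    (f : Polynomial ℂ)
    (hf : f = h.map (algebraMap ℝ ℂ) + Polynomial.C Complex.I * g.map (algebraMap ℝ ℂ))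
    (hnc : f.natDegree ≠ 0)
    (hroots : ∀ z : ℂ, f.eval z = 0 → 0 < z.im) :
    ∀ ω : ℝ,
      0 < h.eval ω * (Polynomial.derivative g).eval ω
            - (Polynomial.derivative h).eval ω * g.eval ω := by
  intro ω
  have hf0 : f ≠ 0 := fun hc => hnc (by simp [hc])
  have hsplit : Splits f := IsAlgClosed.splits f
  have hfac := hsplit.eq_prod_roots
  set s : Multiset ℂ := f.roots with hs
  have hsim : ∀ z ∈ s, 0 < z.im := fun z hz =>
    hroots z ((mem_roots hf0).1 hz)
  have hsne : s ≠ 0 := by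
    intro hc
    apply hnc
    rw [hfac, hc]
    simp
  obtain ⟨-, -, hpos⟩ := wronskian_aux ω s hsim
  have hpos := hpos hsne
  -- imaginary part of f'(ω) * conj f(ω) is positive
  have hlc : f.leadingCoeff ≠ 0 := leadingCoeff_ne_zero.2 hf0
  set P : Polynomial ℂ := (s.map (fun z => X - C z)).prod with hP
  have hIm : 0 < ((derivative f).eval (ω : ℂ) * (starRingEnd ℂ) (f.eval (ω : ℂ))).im := by
    have e1 : (derivative f).eval (ω : ℂ) * (starRingEnd ℂ) (f.eval (ω : ℂ))
        = (Complex.normSq f.leadingCoeff : ℂ) *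
          ((derivative P).eval (ω : ℂ) * (starRingEnd ℂ) (P.eval (ω : ℂ))) := by
      conv_lhs => rw [hfac]
      rw [derivative_C_mul]
      rw [← Complex.mul_conj f.leadingCoeff]
      simp only [eval_mul, eval_C, map_mul]
      ring
    rw [e1, Complex.mul_im]
    simp only [Complex.ofReal_re, Complex.ofReal_im, zero_mul, add_zero]
    exact mul_pos (Complex.normSq_pos.2 hlc) hpos
  -- identify with the Wronskian
  set H : ℝ := h.eval ω
  set G : ℝ := g.eval ω
  set H' : ℝ := (derivative h).eval ω
  set G' : ℝ := (derivative g).eval ω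
  have hev : f.eval (ω : ℂ) = (H : ℂ) + Complex.I * (G : ℂ) := by
    rw [hf]
    have : ((ω : ℂ)) = algebraMap ℝ ℂ ω := rfl
    rw [eval_add, eval_mul, eval_C, eval_map, eval_map, this,
      Polynomial.eval₂_at_apply, Polynomial.eval₂_at_apply]
    rfl
  have hdev : (derivative f).eval (ω : ℂ)
      = (H' : ℂ) + Complex.I * (G' : ℂ) := by
    rw [hf]
    simp only [derivative_add, derivative_C_mul, derivative_map]
    have : ((ω : ℂ)) = algebraMap ℝ ℂ ω := rfl
    rw [eval_add, eval_mul, eval_C, eval_map, eval_map, this,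
      Polynomial.eval₂_at_apply, Polynomial.eval₂_at_apply]
    rfl
  rw [hev, hdev] at hIm
  have : (((H' : ℂ) + Complex.I * (G' : ℂ)) *
      (starRingEnd ℂ) ((H : ℂ) + Complex.I * (G : ℂ))).im
      = H * G' - H' * G := by
    simp [Complex.mul_im, Complex.add_im, Complex.add_re, Complex.mul_re,
      Complex.conj_re, Complex.conj_im, Complex.I_re, Complex.I_im]
    ring
  rw [this] at hIm
  exact hIm
end

section
/- For the family of polynomials p_t(z) = a₁(t)z + a₀(t), t ∈ [0,1], with a₀(t) = 1 and a₁(t) = (2t−1)² − 1: (i) p₀(z) = p₁(z) = 1 is Hurwitz stable; (ii) p_t(iω) ≠ 0 for every (t,ω) ∈ [0,1] × ℝ; and (iii) for each t ∈ (0,1), p_t(z) is not Hurwitz stable, since its only root is z = −1/a₁(t) ∈ [1,∞). Hence the conclusion of the extended Boundary Crossing Theorem can fail if the leading coefficient is allowed to vanish at the left endpoint. -/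
open Polynomial

/-- The coefficient function `a₁(t) = (2t − 1)² − 1`. -/
noncomputable def a₁ (t : ℝ) : ℝ := (2 * t - 1) ^ 2 - 1

/-- The family `p_t(z) = a₁(t)·z + 1` with `a₁(t) = (2t − 1)² − 1`. -/
noncomputable def pFam (t : ℝ) : Polynomial ℂ :=
  Polynomial.C ((a₁ t : ℝ) : ℂ) * Polynomial.X + 1

lemma pFam_eval (t : ℝ) (z : ℂ) : (pFam t).eval z = (a₁ t : ℂ) * z + 1 := by
  simp [pFam]

/-- For the family `p_t(z) = a₁(t)z + a₀(t)`, `t ∈ [0,1]`, with `a₀(t) = 1` and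
`a₁(t) = (2t−1)² − 1`: (i) `p₀ = p₁ = 1` is Hurwitz stable; (ii) `p_t(iω) ≠ 0`
for all `(t,ω) ∈ [0,1] × ℝ`; (iii) for each `t ∈ (0,1)`, `p_t` is not Hurwitz
stable, its only root being `z = −1/a₁(t) ∈ [1,∞)`. -/
theorem boundary_crossing_fails_endpoints :
    (pFam 0 = 1 ∧ pFam 1 = 1 ∧ HurwitzStable (pFam 0) ∧ HurwitzStable (pFam 1)) ∧
    (∀ t ∈ Set.Icc (0 : ℝ) 1, ∀ ω : ℝ, (pFam t).eval (Complex.I * ω) ≠ 0) ∧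
    (∀ t ∈ Set.Ioo (0 : ℝ) 1, ¬ HurwitzStable (pFam t) ∧
      (∀ z : ℂ, (pFam t).eval z = 0 ↔ z = ((-1 / a₁ t : ℝ) : ℂ)) ∧
      (-1 / a₁ t) ∈ Set.Ici (1 : ℝ)) := by
  have h0 : pFam 0 = 1 := by
    have : a₁ 0 = 0 := by norm_num [a₁]
    simp [pFam, this]
  have h1 : pFam 1 = 1 := by
    have : a₁ 1 = 0 := by norm_num [a₁]
    simp [pFam, this]
  refine ⟨⟨h0, h1, ?_, ?_⟩, ?_, ?_⟩
  · intro z hz; rw [h0] at hz; simp at hz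
  · intro z hz; rw [h1] at hz; simp at hz
  · intro t _ ω h
    rw [pFam_eval] at h
    have := congrArg Complex.re h
    simp [Complex.add_re, Complex.mul_re] at this
  · rintro t ⟨ht0, ht1⟩
    have hlt : a₁ t < 0 := by
      unfold a₁; nlinarith
    have hge : (-1 : ℝ) ≤ a₁ t := by
      unfold a₁; nlinarith [sq_nonneg (2 * t - 1)]
    have hne : a₁ t ≠ 0 := ne_of_lt hlt
    have hnec : ((a₁ t : ℂ)) ≠ 0 := by exact_mod_cast hne
    have hroot : ∀ z : ℂ, (pFam t).eval z = 0 ↔ z = ((-1 / a₁ t : ℝ) : ℂ) := by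
      intro z
      rw [pFam_eval]
      constructor
      · intro h
        have : (a₁ t : ℂ) * z = -1 := by linear_combination h
        rw [Complex.ofReal_div, Complex.ofReal_neg, Complex.ofReal_one, eq_div_iff hnec]
        linear_combination this
      · intro h
        subst h
        push_cast
        field_simp
        norm_num
    have hval : (1 : ℝ) ≤ -1 / a₁ t := by
      rw [le_div_iff_of_neg hlt]; linarith
    refine ⟨?_, hroot, hval⟩
    intro hstab
    have := hstab _ ((hroot _).mpr rfl)
    rw [Complex.ofReal_re] at this
    linarith
end
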